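/- Consider noisy SGD updates x_{t+1} = x_t − η_t(g_t + z_t) where E[g_t | x_t] = ∇F(x_t), ‖g_t‖ ≤ L almost surely, and z_t ∼ N(0, L²σ²I_p) is independent of everything else. Suppose F satisfies the expected-curvature condition E[⟨∇F(x_t), x_t − x*⟩] ≥ ν·E[‖x_t − x*‖²] with ν > 0 along the trajectory, for a minimizer x* of F. Then with step sizes η_t = 1/(νt), for every t ≥ 2, E[‖x_t − x*‖²] ≤ 2L²(1 + pσ²)/(t·ν²). -/

import Mathlib

open MeasureTheory ProbabilityTheory
open MeasureTheory ProbabilityTheory Real Filter Set Topology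
open scoped ENNReal NNReal

/-- `z` is a centered Gaussian vector in `ℝ^p` with covariance `v • I_p`:
its coordinates are independent real Gaussians `N(0, v)`. -/
def IsGaussianVec {Ω : Type*} [MeasurableSpace Ω] (P : Measure Ω) {p : ℕ}
    (z : Ω → EuclideanSpace ℝ (Fin p)) (v : NNReal) : Prop :=
  (∀ i, Measure.map (fun ω => z ω i) P = gaussianReal 0 v) ∧
    iIndepFun (fun i ω => z ω i) P


lemma aux_integrable_sq_mul_exp {b : ℝ} (hb : 0 < b) :
    Integrable (fun x : ℝ => x ^ 2 * Real.exp (-b * x ^ 2)) := by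
  refine ((integrable_exp_neg_mul_sq (by linarith : (0:ℝ) < b/2)).const_mul (2/b)).mono'
    ((measurable_id.pow_const 2).mul
      ((measurable_id.pow_const 2).const_mul (-b)).exp).aestronglyMeasurable
    (Filter.Eventually.of_forall fun x => ?_)
  have h1 : (b/2) * x ^ 2 ≤ Real.exp ((b/2) * x ^ 2) := by
    have := Real.add_one_le_exp ((b/2) * x ^ 2)
    nlinarith [sq_nonneg x]
  have h2 : x ^ 2 ≤ (2/b) * Real.exp ((b/2) * x ^ 2) := by
    calc x ^ 2 = (b/2 * x ^ 2) / (b/2) := by field_simp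
    _ ≤ Real.exp ((b/2) * x^2) / (b/2) := div_le_div_of_nonneg_right h1 (by positivity) |>.trans_eq rfl
    _ = (2/b) * Real.exp ((b/2) * x ^ 2) := by rw [div_div_eq_mul_div]; ring
  have h3 : x ^ 2 * Real.exp (-b * x ^ 2)
      ≤ (2/b) * Real.exp ((b/2) * x ^ 2) * Real.exp (-b * x ^ 2) :=
    mul_le_mul_of_nonneg_right h2 (Real.exp_pos _).le
  have h4 : (2/b) * Real.exp ((b/2) * x ^ 2) * Real.exp (-b * x ^ 2)
      = (2/b) * Real.exp (-(b/2) * x ^ 2) := by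
    rw [mul_assoc, ← Real.exp_add]; ring_nf
  rw [norm_eq_abs, abs_of_nonneg (by positivity)]
  rw [h4] at h3; exact h3

lemma aux_integral_sq_mul_exp {b : ℝ} (hb : 0 < b) :
    ∫ x : ℝ, x ^ 2 * Real.exp (-b * x ^ 2) = Real.sqrt (π / b) / (2 * b) := by
  set φ : ℝ → ℝ := fun x => x * Real.exp (-b * x ^ 2) with hφdef
  have hderiv : ∀ x : ℝ, HasDerivAt φ ((1 - 2*b*x^2) * Real.exp (-b * x ^ 2)) x := by
    intro x
    have h1 : HasDerivAt (fun x : ℝ => -b * x ^ 2) (-b * (2 * x)) x := by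
      simpa using ((hasDerivAt_pow 2 x).const_mul (-b))
    have h2 := ((h1.exp)).const_mul 1
    have h3 := (hasDerivAt_id x).mul h1.exp
    refine h3.congr_deriv ?_; simp only [id_eq]; ring
  have hint' : Integrable (fun x : ℝ => (1 - 2*b*x^2) * Real.exp (-b * x ^ 2)) := by
    have := (integrable_exp_neg_mul_sq hb).sub ((aux_integrable_sq_mul_exp hb).const_mul (2*b))
    exact this.congr (Filter.Eventually.of_forall fun x => by simp only [Pi.sub_apply]; ring)
  have htend_top : Tendsto φ atTop (𝓝 0) := by
    have h := tendsto_rpow_abs_mul_exp_neg_mul_sq_cocompact hb 1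
    have h' : Tendsto (fun x : ℝ => |x| ^ (1:ℝ) * Real.exp (-b * x ^ 2)) atTop (𝓝 0) :=
      h.mono_left (by rw [cocompact_eq_atBot_atTop]; exact le_sup_right)
    refine squeeze_zero_norm (fun x => ?_) h'
    rw [norm_eq_abs, abs_mul, abs_of_pos (Real.exp_pos _), Real.rpow_one]
  have htend_bot : Tendsto φ atBot (𝓝 0) := by
    have h := tendsto_rpow_abs_mul_exp_neg_mul_sq_cocompact hb 1
    have h' : Tendsto (fun x : ℝ => |x| ^ (1:ℝ) * Real.exp (-b * x ^ 2)) atBot (𝓝 0) :=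
      h.mono_left (by rw [cocompact_eq_atBot_atTop]; exact le_sup_left)
    refine squeeze_zero_norm (fun x => ?_) h'
    rw [norm_eq_abs, abs_mul, abs_of_pos (Real.exp_pos _), Real.rpow_one]
  have hIoi : ∫ x in Ioi (0:ℝ), (1 - 2*b*x^2) * Real.exp (-b * x ^ 2) = 0 - φ 0 := by
    have := integral_Ioi_of_hasDerivAt_of_tendsto' (a := 0) (f := φ)
      (fun x _ => hderiv x) hint'.integrableOn htend_top
    rw [this]
  have hIic : ∫ x in Iic (0:ℝ), (1 - 2*b*x^2) * Real.exp (-b * x ^ 2) = φ 0 - 0 := by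
    exact integral_Iic_of_hasDerivAt_of_tendsto' (fun x _ => hderiv x) hint'.integrableOn htend_bot
  have hzero : ∫ x : ℝ, (1 - 2*b*x^2) * Real.exp (-b * x ^ 2) = 0 := by
    rw [← intervalIntegral.integral_Iic_add_Ioi hint'.integrableOn hint'.integrableOn, hIoi, hIic]
    simp [hφdef]
  have hsplit : ∫ x : ℝ, (1 - 2*b*x^2) * Real.exp (-b * x ^ 2)
      = (∫ x : ℝ, Real.exp (-b * x ^ 2)) - 2*b * ∫ x : ℝ, x ^ 2 * Real.exp (-b * x ^ 2) := by
    rw [← integral_const_mul, ← integral_sub (integrable_exp_neg_mul_sq hb)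
      (((aux_integrable_sq_mul_exp hb)).const_mul (2*b))]
    congr 1; funext x; ring
  rw [hsplit, integral_gaussian] at hzero
  have : 2*b * ∫ x : ℝ, x ^ 2 * Real.exp (-b * x ^ 2) = Real.sqrt (π / b) := by linarith
  field_simp at this ⊢
  linarith

lemma aux_gauss_pdf_eq (v : NNReal) (hv : v ≠ 0) (f : ℝ → ℝ) :
    ∫ x, f x ∂(gaussianReal 0 v)
      = ∫ x, gaussianPDFReal 0 v x * f x := by
  rw [gaussianReal_of_var_ne_zero 0 hv]
  have h : (gaussianPDF 0 v) = fun x => ((gaussianPDFReal 0 v x).toNNReal : ℝ≥0∞) := by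
    funext x; rfl
  rw [h, integral_withDensity_eq_integral_smul
    ((measurable_gaussianPDFReal 0 v).real_toNNReal) f]
  congr 1; funext x
  rw [NNReal.smul_def, smul_eq_mul, Real.coe_toNNReal _ (gaussianPDFReal_nonneg 0 v x)]

lemma aux_integrable_gauss_pdf (v : NNReal) (hv : v ≠ 0) (f : ℝ → ℝ)
    (h : Integrable (fun x => gaussianPDFReal 0 v x * f x)) :
    Integrable f (gaussianReal 0 v) := by
  rw [gaussianReal_of_var_ne_zero 0 hv]
  have heq : (gaussianPDF 0 v) = fun x => ((gaussianPDFReal 0 v x).toNNReal : ℝ≥0∞) := by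
    funext x; rfl
  rw [heq, integrable_withDensity_iff_integrable_smul
    ((measurable_gaussianPDFReal 0 v).real_toNNReal)]
  refine h.congr (Filter.Eventually.of_forall fun x => ?_)
  simp only [NNReal.smul_def, smul_eq_mul, Real.coe_toNNReal _ (gaussianPDFReal_nonneg 0 v x)]

lemma aux_pdf_sq (v : NNReal) (hv : v ≠ 0) (x : ℝ) :
    gaussianPDFReal 0 v x * x ^ 2
      = (Real.sqrt (2 * π * v))⁻¹ * (x ^ 2 * Real.exp (-(2 * (v:ℝ))⁻¹ * x ^ 2)) := by
  have hvpos : (0:ℝ) < v := lt_of_le_of_ne v.coe_nonneg (by exact_mod_cast (Ne.symm hv))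
  rw [gaussianPDFReal]
  have : -(x - 0) ^ 2 / (2 * (v:ℝ)) = -(2 * (v:ℝ))⁻¹ * x ^ 2 := by
    field_simp; ring
  rw [this]; ring

lemma aux_integrable_sq_gaussian (v : NNReal) :
    Integrable (fun x : ℝ => x ^ 2) (gaussianReal 0 v) := by
  by_cases hv : v = 0
  · rw [hv, gaussianReal_zero_var]
    exact (integrable_const ((0:ℝ)^2)).congr (ae_eq_dirac' (measurable_id.pow_const 2)).symm
  · have hvpos : (0:ℝ) < v := lt_of_le_of_ne v.coe_nonneg (by exact_mod_cast (Ne.symm hv))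
    refine aux_integrable_gauss_pdf v hv _ ?_
    have : Integrable (fun x : ℝ =>
        (Real.sqrt (2 * π * v))⁻¹ * (x ^ 2 * Real.exp (-(2 * (v:ℝ))⁻¹ * x ^ 2))) :=
      (aux_integrable_sq_mul_exp (by positivity)).const_mul _
    exact this.congr (Filter.Eventually.of_forall fun x => (aux_pdf_sq v hv x).symm)

lemma aux_integral_sq_gaussian (v : NNReal) :
    ∫ x, x ^ 2 ∂(gaussianReal 0 v) = (v : ℝ) := by
  by_cases hv : v = 0
  · rw [hv, gaussianReal_zero_var, integral_dirac]
    simp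
  · have hvpos : (0:ℝ) < v := lt_of_le_of_ne v.coe_nonneg (by exact_mod_cast (Ne.symm hv))
    rw [aux_gauss_pdf_eq v hv]
    have heq : (fun x : ℝ => gaussianPDFReal 0 v x * x ^ 2)
        = fun x => (Real.sqrt (2 * π * v))⁻¹ * (x ^ 2 * Real.exp (-(2 * (v:ℝ))⁻¹ * x ^ 2)) := by
      funext x; exact aux_pdf_sq v hv x
    rw [heq, integral_const_mul, aux_integral_sq_mul_exp (by positivity : (0:ℝ) < (2 * (v:ℝ))⁻¹)]
    have h1 : π / (2 * (v:ℝ))⁻¹ = 2 * π * v := by field_simp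
    have h2 : 2 * (2 * (v:ℝ))⁻¹ = (v:ℝ)⁻¹ := by field_simp
    rw [h1, h2]
    have h3 : Real.sqrt (2 * π * v) ≠ 0 := by positivity
    field_simp

lemma aux_integrable_id_gaussian (v : NNReal) :
    Integrable (fun x : ℝ => x) (gaussianReal 0 v) := by
  by_cases hv : v = 0
  · rw [hv, gaussianReal_zero_var]
    exact (integrable_const (0:ℝ)).congr (ae_eq_dirac' measurable_id).symm
  · have hvpos : (0:ℝ) < v := lt_of_le_of_ne v.coe_nonneg (by exact_mod_cast (Ne.symm hv))
    refine aux_integrable_gauss_pdf v hv _ ?_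
    have hbase : Integrable (fun x : ℝ =>
        (Real.sqrt (2 * π * v))⁻¹ * (x * Real.exp (-(2 * (v:ℝ))⁻¹ * x ^ 2))) :=
      (integrable_mul_exp_neg_mul_sq (by positivity)).const_mul _
    refine hbase.congr (Filter.Eventually.of_forall fun x => ?_)
    simp only [gaussianPDFReal_def]
    have : -(x - 0) ^ 2 / (2 * (v:ℝ)) = -(2 * (v:ℝ))⁻¹ * x ^ 2 := by field_simp; ring
    rw [this]; ring

lemma aux_integral_id_gaussian (v : NNReal) :
    ∫ x, x ∂(gaussianReal 0 v) = 0 := by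
  have hmap := gaussianReal_map_const_mul (μ := 0) (v := v) (-1 : ℝ)
  have hone : (NNReal.mk ((-1:ℝ)^2) (sq_nonneg _)) = 1 := by ext; norm_num
  rw [mul_zero, hone, one_mul] at hmap
  have h2 := integral_map (μ := gaussianReal 0 v) (φ := fun x => (-1:ℝ) * x)
    (by fun_prop) (f := fun y : ℝ => y) measurable_id.aestronglyMeasurable
  rw [hmap] at h2
  simp only [neg_one_mul] at h2
  rw [integral_neg] at h2
  linarith

lemma aux_condexp_clm {Ω : Type*} {m m0 : MeasurableSpace Ω} (hm : m ≤ m0) (P : Measure Ω)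
    [IsFiniteMeasure P]
    {E F : Type*} [NormedAddCommGroup E] [NormedSpace ℝ E] [CompleteSpace E]
    [NormedAddCommGroup F] [NormedSpace ℝ F] [CompleteSpace F]
    (T : E →L[ℝ] F) {f : Ω → E} (hf : Integrable f P) :
    P[fun ω => T (f ω)|m] =ᵐ[P] fun ω => T ((P[f|m]) ω) := by
  refine (ae_eq_condExp_of_forall_setIntegral_eq (μ := P) hm (T.integrable_comp hf)
    (fun s _ _ => (T.integrable_comp integrable_condExp).integrableOn)
    (fun s hs hμs => ?_) ?_).symm
  · rw [T.integral_comp_comm integrable_condExp.integrableOn,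
      setIntegral_condExp hm hf hs, T.integral_comp_comm hf.integrableOn]
  · exact ((T.continuous.comp_stronglyMeasurable stronglyMeasurable_condExp)).aestronglyMeasurable

lemma aux_norm_sq_eq {p : ℕ} (u : EuclideanSpace ℝ (Fin p)) :
    ‖u‖ ^ 2 = ∑ i, u i ^ 2 := by
  rw [EuclideanSpace.norm_eq, Real.sq_sqrt (by positivity)]
  simp [Real.norm_eq_abs, sq_abs]

lemma aux_coord_sq_le {p : ℕ} (u : EuclideanSpace ℝ (Fin p)) (i : Fin p) :
    u i ^ 2 ≤ ‖u‖ ^ 2 := by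
  rw [aux_norm_sq_eq]
  exact Finset.single_le_sum (f := fun j => u j ^ 2) (fun j _ => sq_nonneg _) (Finset.mem_univ i)

lemma aux_abs_coord_le {p : ℕ} (u : EuclideanSpace ℝ (Fin p)) (i : Fin p) :
    |u i| ≤ ‖u‖ := by
  have h := aux_coord_sq_le u i
  nlinarith [abs_nonneg (u i), norm_nonneg u, sq_abs (u i)]

lemma aux_inner_eq {p : ℕ} (a b : EuclideanSpace ℝ (Fin p)) :
    (inner ℝ a b : ℝ) = ∑ i, a i * b i := by
  rw [PiLp.inner_apply]
  simp [RCLike.inner_apply, conj_trivial, mul_comm]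

lemma one_step {p : ℕ} {Ω : Type*} [MeasurableSpace Ω] (P : Measure Ω) [IsProbabilityMeasure P]
    (L σ ν : ℝ) (hL : 0 < L) (hσ : 0 ≤ σ)
    (xstar : EuclideanSpace ℝ (Fin p))
    (xt gt zt xt1 : Ω → EuclideanSpace ℝ (Fin p))
    (F' : EuclideanSpace ℝ (Fin p) → EuclideanSpace ℝ (Fin p))
    (hxm : Measurable xt) (hgm : Measurable gt) (hzm : Measurable zt)
    (hunb : P[gt|MeasurableSpace.comap xt inferInstance] =ᵐ[P] fun ω => F' (xt ω))
    (hgb : ∀ᵐ ω ∂P, ‖gt ω‖ ≤ L)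
    (hzmap : ∀ i, Measure.map (fun ω => zt ω i) P = gaussianReal 0 ⟨L ^ 2 * σ ^ 2, by positivity⟩)
    (hind : IndepFun (fun ω => (xt ω, gt ω)) zt P)
    (η : ℝ) (hη : 0 ≤ η)
    (hupd : ∀ ω, xt1 ω = xt ω - η • (gt ω + zt ω))
    (hcurv : (∫ ω, (inner ℝ (F' (xt ω)) (xt ω - xstar) : ℝ) ∂P) ≥ ν * ∫ ω, ‖xt ω - xstar‖ ^ 2 ∂P)
    (hint : Integrable (fun ω => ‖xt ω - xstar‖ ^ 2) P) :
    Integrable (fun ω => ‖xt1 ω - xstar‖ ^ 2) P ∧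
      (∫ ω, ‖xt1 ω - xstar‖ ^ 2 ∂P)
        ≤ (1 - 2 * ν * η) * (∫ ω, ‖xt ω - xstar‖ ^ 2 ∂P)
          + η ^ 2 * (L ^ 2 * (1 + p * σ ^ 2)) := by
  have hL2 : (0:ℝ) ≤ L ^ 2 * σ ^ 2 := by positivity
  set v : NNReal := ⟨L ^ 2 * σ ^ 2, hL2⟩ with hvdef
  have hzmap' : ∀ i, Measure.map (fun ω => zt ω i) P = gaussianReal 0 v := hzmap
  set y : Ω → EuclideanSpace ℝ (Fin p) := fun ω => xt ω - xstar with hy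
  have hym : Measurable y := hxm.sub measurable_const
  have hcoord : ∀ i : Fin p, Measurable fun u : EuclideanSpace ℝ (Fin p) => u i :=
    fun i => (measurable_pi_apply i).comp (WithLp.measurable_ofLp _ _)
  have hzci : ∀ i, Measurable fun ω => zt ω i := fun i => (hcoord i).comp hzm
  -- coordinate integrabilities
  have hyc2 : ∀ i, Integrable (fun ω => y ω i ^ 2) P := by
    intro i
    refine hint.mono' (((hcoord i).comp hym).pow_const 2).aestronglyMeasurable
      (Filter.Eventually.of_forall fun ω => ?_)
    rw [Real.norm_eq_abs, abs_of_nonneg (sq_nonneg _)]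
    exact aux_coord_sq_le (y ω) i
  have hg_int : Integrable gt P :=
    (integrable_const L).mono' hgm.aestronglyMeasurable hgb
  have hgc_int : ∀ i, Integrable (fun ω => gt ω i) P := by
    intro i
    refine (integrable_const L).mono' ((hcoord i).comp hgm).aestronglyMeasurable
      (hgb.mono fun ω h => ?_)
    rw [Real.norm_eq_abs]
    exact (aux_abs_coord_le (gt ω) i).trans h
  have hgc2 : ∀ i, Integrable (fun ω => gt ω i ^ 2) P := by
    intro i
    refine (integrable_const (L ^ 2)).mono'
      (((hcoord i).comp hgm).pow_const 2).aestronglyMeasurable (hgb.mono fun ω h => ?_)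
    rw [Real.norm_eq_abs, abs_of_nonneg (sq_nonneg _)]
    have := (aux_abs_coord_le (gt ω) i).trans h
    nlinarith [abs_nonneg (gt ω i), sq_abs (gt ω i)]
  have hzc_int : ∀ i, Integrable (fun ω => zt ω i) P := by
    intro i
    have h := aux_integrable_id_gaussian v
    rw [← hzmap' i] at h
    exact (integrable_map_measure measurable_id.aestronglyMeasurable
      ((hcoord i).comp hzm).aemeasurable).mp h
  have hzc2 : ∀ i, Integrable (fun ω => zt ω i ^ 2) P := by
    intro i
    have h := aux_integrable_sq_gaussian v
    rw [← hzmap' i] at h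
    exact (integrable_map_measure (measurable_id.pow_const 2).aestronglyMeasurable
      ((hcoord i).comp hzm).aemeasurable).mp h
  have hzc_val : ∀ i, ∫ ω, zt ω i ∂P = 0 := by
    intro i
    have h := aux_integral_id_gaussian v
    rw [← hzmap' i] at h
    have hmeq : ∫ x, x ∂(Measure.map (fun ω => zt ω i) P) = ∫ ω, zt ω i ∂P :=
      integral_map (f := fun x : ℝ => x) ((hzci i).aemeasurable)
        measurable_id.aestronglyMeasurable
    rw [hmeq] at h
    exact h
  have hzc2_val : ∀ i, ∫ ω, zt ω i ^ 2 ∂P = L ^ 2 * σ ^ 2 := by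
    intro i
    have h := aux_integral_sq_gaussian v
    rw [← hzmap' i] at h
    have hmeq : ∫ x, x ^ 2 ∂(Measure.map (fun ω => zt ω i) P) = ∫ ω, zt ω i ^ 2 ∂P :=
      integral_map (f := fun x : ℝ => x ^ 2) ((hzci i).aemeasurable)
        (measurable_id.pow_const 2).aestronglyMeasurable
    rw [hmeq] at h
    exact h
  -- product integrability helper
  have hprod : ∀ (f g : Ω → ℝ), AEStronglyMeasurable f P → AEStronglyMeasurable g P →
      Integrable (fun ω => f ω ^ 2) P → Integrable (fun ω => g ω ^ 2) P →
      Integrable (fun ω => f ω * g ω) P := by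
    intro f g hfm hgm' hf2 hg2
    refine ((hf2.add hg2).const_mul (1/2)).mono' (hfm.mul hgm')
      (Filter.Eventually.of_forall fun ω => ?_)
    rw [Real.norm_eq_abs, abs_mul]
    simp only [Pi.add_apply]
    nlinarith [sq_nonneg (|f ω| - |g ω|), sq_abs (f ω), sq_abs (g ω)]
  have Iyz : ∀ i, Integrable (fun ω => y ω i * zt ω i) P := fun i =>
    hprod _ _ ((hcoord i).comp hym).aestronglyMeasurable
      ((hcoord i).comp hzm).aestronglyMeasurable (hyc2 i) (hzc2 i)
  have Iyg : ∀ i, Integrable (fun ω => y ω i * gt ω i) P := fun i =>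
    hprod _ _ ((hcoord i).comp hym).aestronglyMeasurable
      ((hcoord i).comp hgm).aestronglyMeasurable (hyc2 i) (hgc2 i)
  have Igz : ∀ i, Integrable (fun ω => gt ω i * zt ω i) P := fun i =>
    hprod _ _ ((hcoord i).comp hgm).aestronglyMeasurable
      ((hcoord i).comp hzm).aestronglyMeasurable (hgc2 i) (hzc2 i)
  -- independence of coordinates
  have hind_yz : ∀ i, IndepFun (fun ω => y ω i) (fun ω => zt ω i) P := by
    intro i
    exact hind.comp (φ := fun q : EuclideanSpace ℝ (Fin p) × EuclideanSpace ℝ (Fin p) =>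
      q.1 i - xstar i) (ψ := fun u : EuclideanSpace ℝ (Fin p) => u i)
      (((hcoord i).comp measurable_fst).sub measurable_const) (hcoord i)
  have hind_gz : ∀ i, IndepFun (fun ω => gt ω i) (fun ω => zt ω i) P := by
    intro i
    exact hind.comp (φ := fun q : EuclideanSpace ℝ (Fin p) × EuclideanSpace ℝ (Fin p) =>
      q.2 i) (ψ := fun u : EuclideanSpace ℝ (Fin p) => u i)
      ((hcoord i).comp measurable_snd) (hcoord i)
  have hyz_val : ∀ i, ∫ ω, y ω i * zt ω i ∂P = 0 := by
    intro i
    have h := (hind_yz i).integral_fun_mul_eq_mul_integral (((hcoord i).comp hym).aestronglyMeasurable)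
      (((hcoord i).comp hzm).aestronglyMeasurable)
    rw [hzc_val i, mul_zero] at h
    exact h
  have hgz_val : ∀ i, ∫ ω, gt ω i * zt ω i ∂P = 0 := by
    intro i
    have h := (hind_gz i).integral_fun_mul_eq_mul_integral (((hcoord i).comp hgm).aestronglyMeasurable)
      (((hcoord i).comp hzm).aestronglyMeasurable)
    rw [hzc_val i, mul_zero] at h
    exact h
  -- the six pieces
  set f2 : Ω → ℝ := fun ω => (inner ℝ (y ω) (gt ω) : ℝ) with hf2
  set f3 : Ω → ℝ := fun ω => (inner ℝ (y ω) (zt ω) : ℝ) with hf3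
  set f4 : Ω → ℝ := fun ω => ‖gt ω‖ ^ 2 with hf4
  set f5 : Ω → ℝ := fun ω => (inner ℝ (gt ω) (zt ω) : ℝ) with hf5
  set f6 : Ω → ℝ := fun ω => ‖zt ω‖ ^ 2 with hf6
  have hf2e : f2 = fun ω => ∑ i, y ω i * gt ω i := funext fun ω => aux_inner_eq _ _
  have hf3e : f3 = fun ω => ∑ i, y ω i * zt ω i := funext fun ω => aux_inner_eq _ _
  have hf5e : f5 = fun ω => ∑ i, gt ω i * zt ω i := funext fun ω => aux_inner_eq _ _
  have hf6e : f6 = fun ω => ∑ i, zt ω i ^ 2 := funext fun ω => aux_norm_sq_eq _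
  have I2 : Integrable f2 P := by rw [hf2e]; exact integrable_finset_sum _ fun i _ => Iyg i
  have I3 : Integrable f3 P := by rw [hf3e]; exact integrable_finset_sum _ fun i _ => Iyz i
  have I4 : Integrable f4 P := by
    refine (integrable_const (L ^ 2)).mono' (hgm.norm.pow_const 2).aestronglyMeasurable
      (hgb.mono fun ω h => ?_)
    rw [Real.norm_eq_abs, abs_of_nonneg (sq_nonneg _)]
    exact pow_le_pow_left₀ (norm_nonneg _) h 2
  have I5 : Integrable f5 P := by rw [hf5e]; exact integrable_finset_sum _ fun i _ => Igz i
  have I6 : Integrable f6 P := by rw [hf6e]; exact integrable_finset_sum _ fun i _ => hzc2 i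
  -- values
  have h3val : ∫ ω, f3 ω ∂P = 0 := by
    rw [hf3e, integral_finset_sum _ fun i _ => Iyz i]
    simp [hyz_val]
  have h5val : ∫ ω, f5 ω ∂P = 0 := by
    rw [hf5e, integral_finset_sum _ fun i _ => Igz i]
    simp [hgz_val]
  have h6val : ∫ ω, f6 ω ∂P = p * (L ^ 2 * σ ^ 2) := by
    rw [hf6e, integral_finset_sum _ fun i _ => hzc2 i]
    simp [hzc2_val, Finset.sum_const, mul_comm]
  have h4val : ∫ ω, f4 ω ∂P ≤ L ^ 2 := by
    have := integral_mono_ae I4 (integrable_const (L ^ 2))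
      (hgb.mono fun ω h => pow_le_pow_left₀ (norm_nonneg _) h 2)
    simpa using this
  -- conditional expectation computation: ∫ f2 = ∫ ⟪F'(xt), y⟫ ≥ ν ∫ ‖y‖²
  set m : MeasurableSpace Ω := MeasurableSpace.comap xt inferInstance with hmdef
  have hm : m ≤ _ := hxm.comap_le
  have hxtm : Measurable[m] xt := fun s hs => ⟨s, hs, rfl⟩
  have hyim : ∀ i, StronglyMeasurable[m] (fun ω => y ω i) := by
    intro i
    exact (((hcoord i).comp hxtm).sub (measurable_const (a := xstar i))).stronglyMeasurable
  have hgi_condexp : ∀ i, (P[fun ω => gt ω i|m]) =ᵐ[P] fun ω => F' (xt ω) i := by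
    intro i
    have h1 := aux_condexp_clm hm P (EuclideanSpace.proj (𝕜 := ℝ) i) hg_int
    have h2 : (fun ω => (EuclideanSpace.proj (𝕜 := ℝ) i) ((P[gt|m]) ω)) =ᵐ[P]
        fun ω => F' (xt ω) i := hunb.mono fun ω h => by
      simp only [PiLp.proj_apply, EuclideanSpace.proj, h]
    exact h1.trans h2
  have hmul : ∀ i, (P[fun ω => y ω i * gt ω i|m]) =ᵐ[P]
      fun ω => y ω i * (P[fun ω => gt ω i|m]) ω := by
    intro i
    exact condExp_mul_of_stronglyMeasurable_left (hyim i) (Iyg i) (hgc_int i)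
  have hcongr : ∀ i, (P[fun ω => y ω i * gt ω i|m]) =ᵐ[P]
      fun ω => y ω i * F' (xt ω) i := fun i =>
    (hmul i).trans ((hgi_condexp i).mono fun ω h => by simp only [h])
  have IFi : ∀ i, Integrable (fun ω => y ω i * F' (xt ω) i) P := fun i =>
    integrable_condExp.congr (hcongr i)
  have hIeq : ∀ i, ∫ ω, y ω i * gt ω i ∂P = ∫ ω, y ω i * F' (xt ω) i ∂P := by
    intro i
    rw [← integral_condExp hm (f := fun ω => y ω i * gt ω i)]
    exact integral_congr_ae (hcongr i)
  have h2val : ∫ ω, f2 ω ∂P = ∫ ω, (inner ℝ (F' (xt ω)) (y ω) : ℝ) ∂P := by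
    rw [hf2e, integral_finset_sum _ fun i _ => Iyg i]
    have : (fun ω => (inner ℝ (F' (xt ω)) (y ω) : ℝ)) = fun ω => ∑ i, y ω i * F' (xt ω) i := by
      funext ω
      rw [aux_inner_eq]
      exact Finset.sum_congr rfl fun i _ => mul_comm _ _
    rw [this, integral_finset_sum _ fun i _ => IFi i]
    exact Finset.sum_congr rfl fun i _ => hIeq i
  have h2ge : ∫ ω, f2 ω ∂P ≥ ν * ∫ ω, ‖y ω‖ ^ 2 ∂P := by
    rw [h2val]
    exact hcurv
  -- pointwise expansion
  have hpt : ∀ ω, ‖xt1 ω - xstar‖ ^ 2 =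
      (‖y ω‖ ^ 2 - (2 * η * f2 ω + 2 * η * f3 ω))
        + (η ^ 2 * f4 ω + (2 * η ^ 2 * f5 ω + η ^ 2 * f6 ω)) := by
    intro ω
    have hsub : xt1 ω - xstar = y ω - η • (gt ω + zt ω) := by
      rw [hupd ω, hy, sub_right_comm]
    rw [hsub, norm_sub_sq_real, real_inner_smul_right, inner_add_right, norm_smul, mul_pow,
      norm_add_sq_real]
    simp only [hf2, hf3, hf4, hf5, hf6, Real.norm_eq_abs, sq_abs]
    ring
  have h23 : Integrable (fun ω => 2 * η * f2 ω + 2 * η * f3 ω) P :=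
    (I2.const_mul _).add (I3.const_mul _)
  have h456 : Integrable (fun ω => η ^ 2 * f4 ω + (2 * η ^ 2 * f5 ω + η ^ 2 * f6 ω)) P :=
    (I4.const_mul _).add ((I5.const_mul _).add (I6.const_mul _))
  have Ibig : Integrable (fun ω =>
      (‖y ω‖ ^ 2 - (2 * η * f2 ω + 2 * η * f3 ω))
        + (η ^ 2 * f4 ω + (2 * η ^ 2 * f5 ω + η ^ 2 * f6 ω))) P :=
    (hint.sub h23).add h456
  constructor
  · exact Ibig.congr (Filter.Eventually.of_forall fun ω => (hpt ω).symm)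
  · have hsplit : ∫ ω, ‖xt1 ω - xstar‖ ^ 2 ∂P
        = ((∫ ω, ‖y ω‖ ^ 2 ∂P) - (2 * η * ∫ ω, f2 ω ∂P + 2 * η * ∫ ω, f3 ω ∂P))
          + (η ^ 2 * ∫ ω, f4 ω ∂P + (2 * η ^ 2 * ∫ ω, f5 ω ∂P + η ^ 2 * ∫ ω, f6 ω ∂P)) := by
      have hsub23 : Integrable (fun ω => ‖y ω‖ ^ 2 - (2 * η * f2 ω + 2 * η * f3 ω)) P :=
        hint.sub h23
      have h56 : Integrable (fun ω => 2 * η ^ 2 * f5 ω + η ^ 2 * f6 ω) P :=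
        (I5.const_mul _).add (I6.const_mul _)
      have e1 : ∫ ω, ((‖y ω‖ ^ 2 - (2 * η * f2 ω + 2 * η * f3 ω))
            + (η ^ 2 * f4 ω + (2 * η ^ 2 * f5 ω + η ^ 2 * f6 ω))) ∂P
          = (∫ ω, (‖y ω‖ ^ 2 - (2 * η * f2 ω + 2 * η * f3 ω)) ∂P)
            + ∫ ω, (η ^ 2 * f4 ω + (2 * η ^ 2 * f5 ω + η ^ 2 * f6 ω)) ∂P :=
        integral_add hsub23 h456
      have e2 : ∫ ω, (‖y ω‖ ^ 2 - (2 * η * f2 ω + 2 * η * f3 ω)) ∂P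
          = (∫ ω, ‖y ω‖ ^ 2 ∂P) - ∫ ω, (2 * η * f2 ω + 2 * η * f3 ω) ∂P :=
        integral_sub hint h23
      have e3 : ∫ ω, (2 * η * f2 ω + 2 * η * f3 ω) ∂P
          = (∫ ω, 2 * η * f2 ω ∂P) + ∫ ω, 2 * η * f3 ω ∂P :=
        integral_add (I2.const_mul _) (I3.const_mul _)
      have e4 : ∫ ω, (η ^ 2 * f4 ω + (2 * η ^ 2 * f5 ω + η ^ 2 * f6 ω)) ∂P
          = (∫ ω, η ^ 2 * f4 ω ∂P) + ∫ ω, (2 * η ^ 2 * f5 ω + η ^ 2 * f6 ω) ∂P :=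
        integral_add (I4.const_mul _) h56
      have e5 : ∫ ω, (2 * η ^ 2 * f5 ω + η ^ 2 * f6 ω) ∂P
          = (∫ ω, 2 * η ^ 2 * f5 ω ∂P) + ∫ ω, η ^ 2 * f6 ω ∂P :=
        integral_add (I5.const_mul _) (I6.const_mul _)
      rw [integral_congr_ae (Filter.Eventually.of_forall hpt), e1, e2, e3, e4, e5,
        integral_const_mul, integral_const_mul, integral_const_mul, integral_const_mul,
        integral_const_mul]
    have hIy : ∫ ω, ‖y ω‖ ^ 2 ∂P = ∫ ω, ‖xt ω - xstar‖ ^ 2 ∂P := rfl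
    rw [hsplit, h3val, h5val, h6val, hIy]
    have ha : ν * (∫ ω, ‖y ω‖ ^ 2 ∂P) ≤ ∫ ω, f2 ω ∂P := h2ge
    have h2' : 2 * η * (ν * ∫ ω, ‖y ω‖ ^ 2 ∂P) ≤ 2 * η * ∫ ω, f2 ω ∂P :=
      mul_le_mul_of_nonneg_left ha (by positivity)
    have h4' : η ^ 2 * ∫ ω, f4 ω ∂P ≤ η ^ 2 * L ^ 2 :=
      mul_le_mul_of_nonneg_left h4val (sq_nonneg η)
    rw [hIy] at h2'
    nlinarith [h2', h4']

lemma aux_int_add {Ω E : Type*} [MeasurableSpace Ω] {P : Measure Ω} [NormedAddCommGroup E]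
    {u w : Ω → E} (hu : AEStronglyMeasurable u P) (hw : AEStronglyMeasurable w P)
    (h2u : Integrable (fun ω => ‖u ω‖ ^ 2) P) (h2w : Integrable (fun ω => ‖w ω‖ ^ 2) P) :
    Integrable (fun ω => ‖u ω + w ω‖ ^ 2) P := by
  have hmeas : AEStronglyMeasurable (fun ω => ‖u ω + w ω‖ ^ 2) P := by
    have h := ((hu.add hw).norm.mul (hu.add hw).norm)
    refine h.congr (Filter.Eventually.of_forall fun ω => ?_)
    simp only [Pi.mul_apply, Pi.add_apply]
    ring
  refine ((h2u.add h2w).const_mul 2).mono' hmeas (Filter.Eventually.of_forall fun ω => ?_)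
  rw [Real.norm_eq_abs, abs_of_nonneg (sq_nonneg _)]
  simp only [Pi.add_apply]
  nlinarith [norm_add_le (u ω) (w ω), norm_nonneg (u ω), norm_nonneg (w ω),
    sq_nonneg (‖u ω‖ - ‖w ω‖), norm_nonneg (u ω + w ω),
    pow_le_pow_left₀ (norm_nonneg (u ω + w ω)) (norm_add_le (u ω) (w ω)) 2]

lemma aux_noise_sq_int {p : ℕ} {Ω : Type*} [MeasurableSpace Ω] (P : Measure Ω)
    [IsProbabilityMeasure P] (L σ : ℝ)
    (gt zt : Ω → EuclideanSpace ℝ (Fin p))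
    (hgm : Measurable gt) (hzm : Measurable zt)
    (hgb : ∀ᵐ ω ∂P, ‖gt ω‖ ≤ L)
    (hzmap : ∀ i, Measure.map (fun ω => zt ω i) P
      = gaussianReal 0 ⟨L ^ 2 * σ ^ 2, by positivity⟩) (η : ℝ) :
    Integrable (fun ω => ‖η • (gt ω + zt ω)‖ ^ 2) P := by
  have hg2 : Integrable (fun ω => ‖gt ω‖ ^ 2) P := by
    refine (integrable_const (L ^ 2)).mono' (hgm.norm.pow_const 2).aestronglyMeasurable
      (hgb.mono fun ω h => ?_)
    rw [Real.norm_eq_abs, abs_of_nonneg (sq_nonneg _)]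
    exact pow_le_pow_left₀ (norm_nonneg _) h 2
  have hz2 : Integrable (fun ω => ‖zt ω‖ ^ 2) P := by
    have hzc2 : ∀ i, Integrable (fun ω => zt ω i ^ 2) P := by
      intro i
      have hzci : Measurable fun ω => zt ω i := ((measurable_pi_apply i).comp (WithLp.measurable_ofLp _ _)).comp hzm
      have h := aux_integrable_sq_gaussian ⟨L ^ 2 * σ ^ 2, by positivity⟩
      rw [← hzmap i] at h
      exact (integrable_map_measure (measurable_id.pow_const 2).aestronglyMeasurable
        hzci.aemeasurable).mp h
    have he : (fun ω => ‖zt ω‖ ^ 2) = fun ω => ∑ i, zt ω i ^ 2 :=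
      funext fun ω => aux_norm_sq_eq _
    rw [he]
    exact integrable_finset_sum _ fun i _ => hzc2 i
  have hsum : Integrable (fun ω => ‖gt ω + zt ω‖ ^ 2) P :=
    aux_int_add hgm.aestronglyMeasurable hzm.aestronglyMeasurable hg2 hz2
  refine (hsum.const_mul (η ^ 2)).congr (Filter.Eventually.of_forall fun ω => ?_)
  show η ^ 2 * ‖gt ω + zt ω‖ ^ 2 = ‖η • (gt ω + zt ω)‖ ^ 2
  rw [norm_smul, mul_pow, Real.norm_eq_abs, sq_abs]


/-- convergence lemma for noisy SGD with step sizes `η_t = 1/(νt)`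
under the expected-curvature condition:
`E‖x_t − x*‖² ≤ 2L²(1+pσ²)/(tν²)` for all `t ≥ 2`. -/
theorem noisy_sgd_convergence_lemma
    {p : ℕ} (F : EuclideanSpace ℝ (Fin p) → ℝ)
    (F' : EuclideanSpace ℝ (Fin p) → EuclideanSpace ℝ (Fin p))
    (hdiff : ∀ x, HasGradientAt F (F' x) x)
    (L σ ν : ℝ) (hL : 0 < L) (hσ : 0 ≤ σ) (hν : 0 < ν)
    (xstar : EuclideanSpace ℝ (Fin p)) (hmin : ∀ y, F xstar ≤ F y)
    {Ω : Type*} [MeasurableSpace Ω] (P : Measure Ω) [IsProbabilityMeasure P]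
    (x g z : ℕ → Ω → EuclideanSpace ℝ (Fin p))
    (hx : ∀ t, Measurable (x t)) (hg : ∀ t, Measurable (g t))
    (hzmeas : ∀ t, Measurable (z t))
    -- the stochastic gradient is unbiased given the current iterate
    (hunbiased : ∀ t,
      P[g t|MeasurableSpace.comap (x t) inferInstance] =ᵐ[P] fun ω => F' (x t ω))
    -- the stochastic gradient is bounded by the Lipschitz constant
    (hgbound : ∀ t, ∀ᵐ ω ∂P, ‖g t ω‖ ≤ L)
    -- the injected noise is Gaussian `N(0, L²σ²I_p)`, independent of everything else
    (hgauss : ∀ t, IsGaussianVec P (z t) ⟨L ^ 2 * σ ^ 2, by positivity⟩)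
    (hindep : ∀ t, IndepFun (fun ω => (x t ω, g t ω)) (z t) P)
    -- SGD update with step size `η_t = 1/(νt)`
    (hupdate : ∀ t ω, x (t + 1) ω = x t ω - (1 / (ν * t)) • (g t ω + z t ω))
    -- expected-curvature condition along the trajectory
    (hcurv : ∀ t, (∫ ω, (inner ℝ (F' (x t ω)) (x t ω - xstar) : ℝ) ∂P) ≥
      ν * ∫ ω, ‖x t ω - xstar‖ ^ 2 ∂P)
    (t : ℕ) (ht : 2 ≤ t) :
    (∫ ω, ‖x t ω - xstar‖ ^ 2 ∂P) ≤
      2 * L ^ 2 * (1 + p * σ ^ 2) / (t * ν ^ 2) := by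
  have hC : (0:ℝ) ≤ L ^ 2 * (1 + p * σ ^ 2) := by positivity
  by_cases hint1 : Integrable (fun ω => ‖x 1 ω - xstar‖ ^ 2) P
  · -- integrable case
    have hstep : ∀ s : ℕ, 1 ≤ s → Integrable (fun ω => ‖x s ω - xstar‖ ^ 2) P →
        Integrable (fun ω => ‖x (s+1) ω - xstar‖ ^ 2) P ∧
          (∫ ω, ‖x (s+1) ω - xstar‖ ^ 2 ∂P)
            ≤ (1 - 2 * ν * (1 / (ν * s))) * (∫ ω, ‖x s ω - xstar‖ ^ 2 ∂P)
              + (1 / (ν * s)) ^ 2 * (L ^ 2 * (1 + p * σ ^ 2)) := by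
      intro s hs hi
      have hspos : (0:ℝ) < (s:ℝ) := by exact_mod_cast hs
      exact one_step P L σ ν hL hσ xstar (x s) (g s) (z s) (x (s+1)) F'
        (hx s) (hg s) (hzmeas s) (hunbiased s) (hgbound s) (hgauss s).1 (hindep s)
        (1 / (ν * s)) (by positivity) (hupdate s) (hcurv s) hi
    have hInt : ∀ s : ℕ, 1 ≤ s → Integrable (fun ω => ‖x s ω - xstar‖ ^ 2) P := by
      intro s hs
      induction s, hs using Nat.le_induction with
      | base => exact hint1
      | succ n hn ih => exact (hstep n hn ih).1
    have key : ∀ s : ℕ, 2 ≤ s →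
        (∫ ω, ‖x s ω - xstar‖ ^ 2 ∂P) ≤ 2 * L ^ 2 * (1 + p * σ ^ 2) / (s * ν ^ 2) := by
      intro s hs
      induction s, hs using Nat.le_induction with
      | base =>
        have h := (hstep 1 le_rfl hint1).2
        have h1 : (1 - 2 * ν * (1 / (ν * ((1:ℕ):ℝ)))) = -1 := by
          push_cast
          field_simp
          norm_num
        have h2 : ((1:ℝ) / (ν * ((1:ℕ):ℝ))) ^ 2 = 1 / ν ^ 2 := by
          push_cast
          field_simp
        rw [h1, h2] at h
        have hA1 : (0:ℝ) ≤ ∫ ω, ‖x 1 ω - xstar‖ ^ 2 ∂P :=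
          integral_nonneg fun ω => sq_nonneg _
        have heq2 : (2:ℝ) * L ^ 2 * (1 + (p:ℝ) * σ ^ 2) / (((2:ℕ):ℝ) * ν ^ 2)
            = 1 / ν ^ 2 * (L ^ 2 * (1 + (p:ℝ) * σ ^ 2)) := by
          push_cast
          field_simp
        have h12 : x (1 + 1) = x 2 := by norm_num
        rw [h12] at h
        linarith [h, hA1, heq2.ge, heq2.le]
      | succ n hn ih =>
        have hn1 : (1:ℕ) ≤ n := le_trans (by norm_num) hn
        have h := (hstep n hn1 (hInt n hn1)).2
        set S : ℝ := (n:ℝ) with hS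
        have hS2 : (2:ℝ) ≤ S := by rw [hS]; exact_mod_cast hn
        have hSpos : (0:ℝ) < S := by linarith
        have hν' : ν ≠ 0 := ne_of_gt hν
        have hS' : S ≠ 0 := ne_of_gt hSpos
        set C : ℝ := L ^ 2 * (1 + p * σ ^ 2) with hCdef
        have hfrac : (1 - 2 * ν * (1 / (ν * S))) = 1 - 2 / S := by
          field_simp
        have hfrac2 : ((1:ℝ) / (ν * S)) ^ 2 = 1 / (ν ^ 2 * S ^ 2) := by
          field_simp
        rw [hfrac, hfrac2] at h
        have hposco : (0:ℝ) ≤ 1 - 2 / S := by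
          rw [sub_nonneg]
          rw [div_le_one hSpos]
          linarith
        have ihS : (∫ ω, ‖x n ω - xstar‖ ^ 2 ∂P) ≤ 2 * C / (S * ν ^ 2) := by
          have : 2 * L ^ 2 * (1 + p * σ ^ 2) / ((n:ℝ) * ν ^ 2) = 2 * C / (S * ν ^ 2) := by
            rw [hCdef]; ring
          rw [← this]; exact ih
        have hmul : (1 - 2 / S) * (∫ ω, ‖x n ω - xstar‖ ^ 2 ∂P)
            ≤ (1 - 2 / S) * (2 * C / (S * ν ^ 2)) :=
          mul_le_mul_of_nonneg_left ihS hposco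
        have harith : (1 - 2 / S) * (2 * C / (S * ν ^ 2)) + 1 / (ν ^ 2 * S ^ 2) * C
            ≤ 2 * C / ((S + 1) * ν ^ 2) := by
          have heq : 2 * C / ((S + 1) * ν ^ 2)
              - ((1 - 2 / S) * (2 * C / (S * ν ^ 2)) + 1 / (ν ^ 2 * S ^ 2) * C)
              = C * (S + 3) / (S ^ 2 * (S + 1) * ν ^ 2) := by
            field_simp
            ring
          have hpos : (0:ℝ) ≤ C * (S + 3) / (S ^ 2 * (S + 1) * ν ^ 2) := by positivity
          linarith
        have hgoal : 2 * L ^ 2 * (1 + p * σ ^ 2) / ((↑(n+1):ℝ) * ν ^ 2)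
            = 2 * C / ((S + 1) * ν ^ 2) := by
          push_cast
          rw [hCdef, hS]
          ring
        rw [hgoal]
        calc (∫ ω, ‖x (n+1) ω - xstar‖ ^ 2 ∂P)
            ≤ (1 - 2 / S) * (∫ ω, ‖x n ω - xstar‖ ^ 2 ∂P) + 1 / (ν ^ 2 * S ^ 2) * C := h
          _ ≤ (1 - 2 / S) * (2 * C / (S * ν ^ 2)) + 1 / (ν ^ 2 * S ^ 2) * C := by linarith
          _ ≤ 2 * C / ((S + 1) * ν ^ 2) := harith
    exact key t ht
  · -- non-integrable case: all integrals are 0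
    have hnone : ∀ s : ℕ, 1 ≤ s → ¬ Integrable (fun ω => ‖x s ω - xstar‖ ^ 2) P := by
      intro s hs
      induction s, hs using Nat.le_induction with
      | base => exact hint1
      | succ n hn ih =>
        intro hint'
        apply ih
        have hxeq : (fun ω => x n ω - xstar)
            = fun ω => (x (n+1) ω - xstar) + (1 / (ν * n)) • (g n ω + z n ω) := by
          funext ω
          rw [hupdate n ω]
          abel
        have hnoise := aux_noise_sq_int P L σ (g n) (z n) (hg n) (hzmeas n)
          (hgbound n) (hgauss n).1 (1 / (ν * n))
        have := aux_int_add ((hx (n+1)).sub measurable_const).aestronglyMeasurable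
          (((hg n).add (hzmeas n)).const_smul (1 / (ν * (n:ℝ)))).aestronglyMeasurable
          hint' hnoise
        refine this.congr (Filter.Eventually.of_forall fun ω => ?_)
        show ‖(x (n+1) ω - xstar) + (1 / (ν * (n:ℝ))) • (g n ω + z n ω)‖ ^ 2
            = ‖x n ω - xstar‖ ^ 2
        rw [congrFun hxeq ω]
    have h0 : (∫ ω, ‖x t ω - xstar‖ ^ 2 ∂P) = 0 :=
      integral_undef (hnone t (le_trans (by norm_num) ht))
    rw [h0]
    positivity
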